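/- For all γ ∈ [0,1], t > 0 and real numbers x, y, z, the heat-kernel bound p_t(z - y + γ(y - x)) ≤ p_t(z-y) + p_t(z-x) + (2πt)^{-1/2} · 𝟙_{|y-x| > |z-y|} holds. -/
import Mathlib


open Real

noncomputable def heatK (t x : ℝ) : ℝ := (Real.sqrt (2 * π * t))⁻¹ * Real.exp (-x ^ 2 / (2 * t))

lemma heatK_nonneg (t x : ℝ) : 0 ≤ heatK t x := by
  unfold heatK; positivity

lemma heatK_le_coef (t x : ℝ) (ht : 0 < t) : heatK t x ≤ (Real.sqrt (2 * π * t))⁻¹ := by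
  unfold heatK
  have h1 : Real.exp (-x ^ 2 / (2 * t)) ≤ 1 := by
    apply Real.exp_le_one_iff.mpr
    apply div_nonpos_of_nonpos_of_nonneg (by nlinarith [sq_nonneg x]) (by linarith)
  nlinarith [Real.sqrt_nonneg (2 * π * t), inv_nonneg.mpr (Real.sqrt_nonneg (2 * π * t))]

lemma heatK_mono (t u v : ℝ) (ht : 0 < t) (h : u ^ 2 ≤ v ^ 2) : heatK t v ≤ heatK t u := by
  unfold heatK
  have hc : 0 ≤ (Real.sqrt (2 * π * t))⁻¹ := by positivity
  apply mul_le_mul_of_nonneg_left _ hc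
  apply Real.exp_le_exp.mpr
  exact div_le_div_of_nonneg_right (by linarith : -v ^ 2 ≤ -u ^ 2) (by linarith)

theorem stmt_15 (γ t x y z : ℝ) (hγ₀ : 0 ≤ γ) (hγ₁ : γ ≤ 1) (ht : 0 < t) :
    heatK t (z - y + γ * (y - x)) ≤
      heatK t (z - y) + heatK t (z - x) +
        (Real.sqrt (2 * π * t))⁻¹ * (if |z - y| < |y - x| then (1 : ℝ) else 0) := by
  by_cases hind : |z - y| < |y - x|
  · simp only [hind, if_true, mul_one]
    have := heatK_le_coef t (z - y + γ * (y - x)) ht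
    have h1 := heatK_nonneg t (z - y)
    have h2 := heatK_nonneg t (z - x)
    linarith
  · simp only [hind, if_false, mul_zero, add_zero]
    push_neg at hind
    set a := z - y with ha
    set b := z - x with hb
    have hw : z - y + γ * (y - x) = (1 - γ) * a + γ * b := by rw [ha, hb]; ring
    rw [hw]
    -- a * b ≥ 0: otherwise |y - x| = |a| + |b| > |a| = |z - y|
    have hab : 0 ≤ a * b := by
      by_contra hne
      push_neg at hne
      rcases abs_cases a with ⟨e1, e2⟩ | ⟨e1, e2⟩ <;>
        rcases abs_cases (y - x) with ⟨f1, f2⟩ | ⟨f1, f2⟩ <;> nlinarith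
    rcases le_total (a ^ 2) (b ^ 2) with hle | hle
    · have : heatK t ((1 - γ) * a + γ * b) ≤ heatK t a := by
        apply heatK_mono t a _ ht
        have hba : a ^ 2 ≤ a * b := by nlinarith [mul_nonneg (sq_nonneg a) (sub_nonneg.mpr hle)]
        nlinarith [sq_nonneg (γ * (b - a)), mul_nonneg hγ₀ (sub_nonneg.mpr hba)]
      have := heatK_nonneg t b
      linarith
    · have : heatK t ((1 - γ) * a + γ * b) ≤ heatK t b := by
        apply heatK_mono t b _ ht
        have hba : b ^ 2 ≤ a * b := by nlinarith [mul_nonneg (sq_nonneg b) (sub_nonneg.mpr hle)]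
        nlinarith [sq_nonneg ((1 - γ) * (a - b)), mul_nonneg (sub_nonneg.mpr hγ₁) (sub_nonneg.mpr hba)]
      have := heatK_nonneg t a
      linarith
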